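/- In the partial crossed product A #_{(α,ω)} H, for all a,b ∈ A and h,k ∈ H one has (a # h)(b # k) = Σ a(h₍₁₎·b)ω(h₍₂₎,k₍₁₎) # h₍₃₎k₍₂₎. -/

import Mathlib

open TensorProduct

noncomputable section

/-- A twisted partial action `(α, ω)` of a Hopf algebra `H` on a unital
algebra `A` (Definition 2.1 of Alves–Batista–Dokuchaev–Paques).  Sweedler sums
are expressed by quantifying over arbitrary finite representations of the
comultiplication. -/
structure TwistedPartialAction (k H A : Type) [CommRing k]
    [Ring H] [HopfAlgebra k H] [Ring A] [Algebra k A] where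
  act : H →ₗ[k] A →ₗ[k] A
  cocycle : H →ₗ[k] H →ₗ[k] A
  /-- `1_H · a = a` -/
  act_one : ∀ a : A, act 1 a = a
  /-- `h · (ab) = Σ (h₁ · a)(h₂ · b)` -/
  act_mul : ∀ (h : H) (a b : A) (ι : Type) (s : Finset ι) (h1 h2 : ι → H),
    Coalgebra.comul (R := k) h = ∑ i ∈ s, h1 i ⊗ₜ[k] h2 i →
    act h (a * b) = ∑ i ∈ s, act (h1 i) a * act (h2 i) b
  /-- `Σ (h₁ · (l₁ · a)) ω(h₂, l₂) = Σ ω(h₁, l₁)(h₂ l₂ · a)` -/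
  twisted : ∀ (h l : H) (a : A) (ι κ : Type) (s : Finset ι) (t : Finset κ)
    (h1 h2 : ι → H) (l1 l2 : κ → H),
    Coalgebra.comul (R := k) h = ∑ i ∈ s, h1 i ⊗ₜ[k] h2 i →
    Coalgebra.comul (R := k) l = ∑ j ∈ t, l1 j ⊗ₜ[k] l2 j →
    ∑ i ∈ s, ∑ j ∈ t, act (h1 i) (act (l1 j) a) * cocycle (h2 i) (l2 j) =
      ∑ i ∈ s, ∑ j ∈ t, cocycle (h1 i) (l1 j) * act (h2 i * l2 j) a
  /-- `ω(h,l) = Σ ω(h₁, l₁)(h₂ l₂ · 1)` -/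
  cocycle_absorb : ∀ (h l : H) (ι κ : Type) (s : Finset ι) (t : Finset κ)
    (h1 h2 : ι → H) (l1 l2 : κ → H),
    Coalgebra.comul (R := k) h = ∑ i ∈ s, h1 i ⊗ₜ[k] h2 i →
    Coalgebra.comul (R := k) l = ∑ j ∈ t, l1 j ⊗ₜ[k] l2 j →
    cocycle h l = ∑ i ∈ s, ∑ j ∈ t, cocycle (h1 i) (l1 j) * act (h2 i * l2 j) 1

/-- The element `a # h = Σ a(h₁ · 1_A) ⊗ h₂` of `A ⊗ H`. -/
def sharp {k H A : Type} [CommRing k] [Ring H] [HopfAlgebra k H]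
    [Ring A] [Algebra k A] (act : H →ₗ[k] A →ₗ[k] A) (a : A) (h : H) :
    A ⊗[k] H :=
  (TensorProduct.map ((LinearMap.mulLeft k a) ∘ₗ (LinearMap.flip act) 1)
    LinearMap.id) (Coalgebra.comul (R := k) h)

/-- The partial crossed product `A #_{(α,ω)} H`, as a submodule of `A ⊗ H`:
the span of the elements `a # h`. -/
def crossedSpan {k H A : Type} [CommRing k] [Ring H] [HopfAlgebra k H]
    [Ring A] [Algebra k A] (act : H →ₗ[k] A →ₗ[k] A) :
    Submodule k (A ⊗[k] H) :=
  Submodule.span k {x : A ⊗[k] H | ∃ a h, sharp act a h = x}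

/-- `μ` is the multiplication `(a ⊗ h)(b ⊗ l) = Σ a(h₁·b)ω(h₂,l₁) ⊗ h₃l₂`
on `A ⊗ H`. -/
def IsCrossedMul {k H A : Type} [CommRing k] [Ring H] [HopfAlgebra k H]
    [Ring A] [Algebra k A] (act : H →ₗ[k] A →ₗ[k] A)
    (cocycle : H →ₗ[k] H →ₗ[k] A)
    (μ : A ⊗[k] H →ₗ[k] A ⊗[k] H →ₗ[k] A ⊗[k] H) : Prop :=
  ∀ (a b : A) (h l : H) (ι ι' κ : Type) (s : Finset ι) (s' : ι → Finset ι')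
    (t : Finset κ) (h1 h2 : ι → H) (h21 h22 : ι → ι' → H) (l1 l2 : κ → H),
    Coalgebra.comul (R := k) h = ∑ i ∈ s, h1 i ⊗ₜ[k] h2 i →
    (∀ i ∈ s, Coalgebra.comul (R := k) (h2 i) =
      ∑ j ∈ s' i, h21 i j ⊗ₜ[k] h22 i j) →
    Coalgebra.comul (R := k) l = ∑ p ∈ t, l1 p ⊗ₜ[k] l2 p →
    μ (a ⊗ₜ[k] h) (b ⊗ₜ[k] l) =
      ∑ i ∈ s, ∑ j ∈ s' i, ∑ p ∈ t,
        (a * act (h1 i) b * cocycle (h21 i j) (l1 p)) ⊗ₜ[k] (h22 i j * l2 p)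

section Aux
variable {k : Type} [CommRing k]

namespace PCP

section Congr

variable {M V : Type} [AddCommGroup M] [Module k M] [AddCommGroup V] [Module k V]

/-- Bundle a trilinear function into an iterated linear map. -/
def bundle3 (B : M → M → M → V)
    (a1 : ∀ x x' y z, B (x + x') y z = B x y z + B x' y z)
    (s1 : ∀ (c : k) (x y z : M), B (c • x) y z = c • B x y z)
    (a2 : ∀ x y y' z, B x (y + y') z = B x y z + B x y' z)
    (s2 : ∀ (c : k) (x y z : M), B x (c • y) z = c • B x y z)
    (a3 : ∀ x y z z', B x y (z + z') = B x y z + B x y z')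
    (s3 : ∀ (c : k) (x y z : M), B x y (c • z) = c • B x y z) :
    M →ₗ[k] M →ₗ[k] M →ₗ[k] V where
  toFun x :=
    { toFun := fun y =>
        { toFun := B x y
          map_add' := a3 x y
          map_smul' := fun c z => s3 c x y z }
      map_add' := fun y y' => LinearMap.ext fun z => a2 x y y' z
      map_smul' := fun c y => LinearMap.ext fun z => s2 c x y z }
  map_add' x x' := LinearMap.ext fun y => LinearMap.ext fun z => a1 x x' y z
  map_smul' c x := LinearMap.ext fun y => LinearMap.ext fun z => s1 c x y z

@[simp] lemma bundle3_apply (B : M → M → M → V) (a1 s1 a2 s2 a3 s3) (x y z : M) :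
    bundle3 (k := k) B a1 s1 a2 s2 a3 s3 x y z = B x y z := rfl

/-- Bundle a 5-linear function into an iterated linear map. -/
def bundle5 (B : M → M → M → M → M → V)
    (a1 : ∀ x x' y z w v, B (x + x') y z w v = B x y z w v + B x' y z w v)
    (s1 : ∀ (c : k) (x y z w v : M), B (c • x) y z w v = c • B x y z w v)
    (a2 : ∀ x y y' z w v, B x (y + y') z w v = B x y z w v + B x y' z w v)
    (s2 : ∀ (c : k) (x y z w v : M), B x (c • y) z w v = c • B x y z w v)
    (a3 : ∀ x y z z' w v, B x y (z + z') w v = B x y z w v + B x y z' w v)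
    (s3 : ∀ (c : k) (x y z w v : M), B x y (c • z) w v = c • B x y z w v)
    (a4 : ∀ x y z w w' v, B x y z (w + w') v = B x y z w v + B x y z w' v)
    (s4 : ∀ (c : k) (x y z w v : M), B x y z (c • w) v = c • B x y z w v)
    (a5 : ∀ x y z w v v', B x y z w (v + v') = B x y z w v + B x y z w v')
    (s5 : ∀ (c : k) (x y z w v : M), B x y z w (c • v) = c • B x y z w v) :
    M →ₗ[k] M →ₗ[k] M →ₗ[k] M →ₗ[k] M →ₗ[k] V where
  toFun x :=
    { toFun := fun y => bundle3 (k := k) (B x y) (a3 x y) (fun c => s3 c x y)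
        (a4 x y) (fun c => s4 c x y) (a5 x y) (fun c => s5 c x y)
      map_add' := fun y y' => LinearMap.ext fun z => LinearMap.ext fun w =>
        LinearMap.ext fun v => a2 x y y' z w v
      map_smul' := fun c y => LinearMap.ext fun z => LinearMap.ext fun w =>
        LinearMap.ext fun v => s2 c x y z w v }
  map_add' x x' := LinearMap.ext fun y => LinearMap.ext fun z => LinearMap.ext fun w =>
    LinearMap.ext fun v => a1 x x' y z w v
  map_smul' c x := LinearMap.ext fun y => LinearMap.ext fun z => LinearMap.ext fun w =>
    LinearMap.ext fun v => s1 c x y z w v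

@[simp] lemma bundle5_apply (B : M → M → M → M → M → V)
    (a1 s1 a2 s2 a3 s3 a4 s4 a5 s5) (x y z w v : M) :
    bundle5 (k := k) B a1 s1 a2 s2 a3 s3 a4 s4 a5 s5 x y z w v = B x y z w v := rfl

/-- Evaluate a trilinear map on `M ⊗ (M ⊗ M)`, as a linear map in the trilinear map. -/
def ev3L : (M →ₗ[k] M →ₗ[k] M →ₗ[k] V) →ₗ[k] (M ⊗[k] (M ⊗[k] M) →ₗ[k] V) :=
  (TensorProduct.uncurry (RingHom.id k) M (M ⊗[k] M) V) ∘ₗ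
    (LinearMap.llcomp k M (M →ₗ[k] M →ₗ[k] V) (M ⊗[k] M →ₗ[k] V) (TensorProduct.uncurry (RingHom.id k) M M V))

@[simp] lemma ev3L_tmul (L : M →ₗ[k] M →ₗ[k] M →ₗ[k] V) (x y z : M) :
    ev3L (k := k) L (x ⊗ₜ[k] (y ⊗ₜ[k] z)) = L x y z := by
  simp [ev3L]

def ev4L : (M →ₗ[k] M →ₗ[k] M →ₗ[k] M →ₗ[k] V) →ₗ[k] (M ⊗[k] (M ⊗[k] (M ⊗[k] M)) →ₗ[k] V) :=
  (TensorProduct.uncurry (RingHom.id k) M (M ⊗[k] (M ⊗[k] M)) V) ∘ₗ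
    (LinearMap.llcomp k M (M →ₗ[k] M →ₗ[k] M →ₗ[k] V) (M ⊗[k] (M ⊗[k] M) →ₗ[k] V) ev3L)

@[simp] lemma ev4L_tmul (L : M →ₗ[k] M →ₗ[k] M →ₗ[k] M →ₗ[k] V) (x y z w : M) :
    ev4L (k := k) L (x ⊗ₜ[k] (y ⊗ₜ[k] (z ⊗ₜ[k] w))) = L x y z w := by
  simp [ev4L]

def ev5L : (M →ₗ[k] M →ₗ[k] M →ₗ[k] M →ₗ[k] M →ₗ[k] V) →ₗ[k]
    (M ⊗[k] (M ⊗[k] (M ⊗[k] (M ⊗[k] M))) →ₗ[k] V) :=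
  (TensorProduct.uncurry (RingHom.id k) M (M ⊗[k] (M ⊗[k] (M ⊗[k] M))) V) ∘ₗ
    (LinearMap.llcomp k M (M →ₗ[k] M →ₗ[k] M →ₗ[k] M →ₗ[k] V)
      (M ⊗[k] (M ⊗[k] (M ⊗[k] M)) →ₗ[k] V) ev4L)

@[simp] lemma ev5L_tmul (L : M →ₗ[k] M →ₗ[k] M →ₗ[k] M →ₗ[k] M →ₗ[k] V) (x y z w v : M) :
    ev5L (k := k) L (x ⊗ₜ[k] (y ⊗ₜ[k] (z ⊗ₜ[k] (w ⊗ₜ[k] v)))) = L x y z w v := by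
  simp [ev5L]

lemma rep_congr3 {ι κ : Type} {s : Finset ι} {t : Finset κ}
    {x1 x2 x3 : ι → M} {y1 y2 y3 : κ → M}
    (hrep : ∑ i ∈ s, x1 i ⊗ₜ[k] (x2 i ⊗ₜ[k] x3 i) = ∑ j ∈ t, y1 j ⊗ₜ[k] (y2 j ⊗ₜ[k] y3 j))
    (B : M → M → M → V)
    (a1 : ∀ x x' y z, B (x + x') y z = B x y z + B x' y z)
    (s1 : ∀ (c : k) (x y z : M), B (c • x) y z = c • B x y z)
    (a2 : ∀ x y y' z, B x (y + y') z = B x y z + B x y' z)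
    (s2 : ∀ (c : k) (x y z : M), B x (c • y) z = c • B x y z)
    (a3 : ∀ x y z z', B x y (z + z') = B x y z + B x y z')
    (s3 : ∀ (c : k) (x y z : M), B x y (c • z) = c • B x y z) :
    ∑ i ∈ s, B (x1 i) (x2 i) (x3 i) = ∑ j ∈ t, B (y1 j) (y2 j) (y3 j) := by
  have h := congrArg (ev3L (k := k) (bundle3 (k := k) B a1 s1 a2 s2 a3 s3)) hrep
  simpa [map_sum] using h

lemma rep_congr5 {ι κ : Type} {s : Finset ι} {t : Finset κ}
    {x1 x2 x3 x4 x5 : ι → M} {y1 y2 y3 y4 y5 : κ → M}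
    (hrep : ∑ i ∈ s, x1 i ⊗ₜ[k] (x2 i ⊗ₜ[k] (x3 i ⊗ₜ[k] (x4 i ⊗ₜ[k] x5 i)))
      = ∑ j ∈ t, y1 j ⊗ₜ[k] (y2 j ⊗ₜ[k] (y3 j ⊗ₜ[k] (y4 j ⊗ₜ[k] y5 j))))
    (B : M → M → M → M → M → V)
    (a1 : ∀ x x' y z w v, B (x + x') y z w v = B x y z w v + B x' y z w v)
    (s1 : ∀ (c : k) (x y z w v : M), B (c • x) y z w v = c • B x y z w v)
    (a2 : ∀ x y y' z w v, B x (y + y') z w v = B x y z w v + B x y' z w v)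
    (s2 : ∀ (c : k) (x y z w v : M), B x (c • y) z w v = c • B x y z w v)
    (a3 : ∀ x y z z' w v, B x y (z + z') w v = B x y z w v + B x y z' w v)
    (s3 : ∀ (c : k) (x y z w v : M), B x y (c • z) w v = c • B x y z w v)
    (a4 : ∀ x y z w w' v, B x y z (w + w') v = B x y z w v + B x y z w' v)
    (s4 : ∀ (c : k) (x y z w v : M), B x y z (c • w) v = c • B x y z w v)
    (a5 : ∀ x y z w v v', B x y z w (v + v') = B x y z w v + B x y z w v')
    (s5 : ∀ (c : k) (x y z w v : M), B x y z w (c • v) = c • B x y z w v) :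
    ∑ i ∈ s, B (x1 i) (x2 i) (x3 i) (x4 i) (x5 i)
      = ∑ j ∈ t, B (y1 j) (y2 j) (y3 j) (y4 j) (y5 j) := by
  have h := congrArg (ev5L (k := k) (bundle5 (k := k) B a1 s1 a2 s2 a3 s3 a4 s4 a5 s5)) hrep
  simpa [map_sum] using h

end Congr

section Co

variable {H : Type} [Ring H] [HopfAlgebra k H]

/-- splitting the left tensorand via comultiplication -/
def s21 : H ⊗[k] H →ₗ[k] H ⊗[k] (H ⊗[k] H) :=
  (TensorProduct.assoc k H H H).toLinearMap ∘ₗ LinearMap.rTensor H (Coalgebra.comul (R := k))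

lemma s21_comul (z : H) :
    s21 (k := k) (H := H) (Coalgebra.comul (R := k) z)
      = LinearMap.lTensor H (Coalgebra.comul (R := k)) (Coalgebra.comul (R := k) z) := by
  simpa [s21] using Coalgebra.coassoc_apply (R := k) (A := H) z

variable (N : H → Finset (H × H))
variable (hN : ∀ z : H, Coalgebra.comul (R := k) z = ∑ p ∈ N z, p.1 ⊗ₜ[k] p.2)
include hN

/-- Engine lemma: coassociativity for arbitrary finite representations. -/
lemma crm {M : Type} [AddCommGroup M] [Module k M] (φ : H →ₗ[k] M)
    {σ : Type} (S : Finset σ) (f g : σ → H) (y : H)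
    (hy : Coalgebra.comul (R := k) y = ∑ j ∈ S, f j ⊗ₜ[k] g j) :
    ∑ j ∈ S, ∑ v ∈ N (f j), v.1 ⊗ₜ[k] (v.2 ⊗ₜ[k] φ (g j))
      = ∑ j ∈ S, f j ⊗ₜ[k] (LinearMap.lTensor H φ (Coalgebra.comul (R := k) (g j))) := by
  have h0 := Coalgebra.coassoc_apply (R := k) (A := H) y
  have hA : TensorProduct.assoc k H H H
        ((Coalgebra.comul (R := k)).rTensor H (Coalgebra.comul (R := k) y))
      = ∑ j ∈ S, ∑ v ∈ N (f j), v.1 ⊗ₜ[k] (v.2 ⊗ₜ[k] g j) := by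
    rw [hy, map_sum, map_sum]
    refine Finset.sum_congr rfl fun j _ => ?_
    rw [LinearMap.rTensor_tmul, hN (f j), TensorProduct.sum_tmul, map_sum]
    exact Finset.sum_congr rfl fun v _ => TensorProduct.assoc_tmul _ _ _
  have hB : (Coalgebra.comul (R := k)).lTensor H (Coalgebra.comul (R := k) y)
      = ∑ j ∈ S, f j ⊗ₜ[k] Coalgebra.comul (R := k) (g j) := by
    rw [hy, map_sum]
    exact Finset.sum_congr rfl fun j _ => LinearMap.lTensor_tmul _ _ _ _
  have h1 : (∑ j ∈ S, ∑ v ∈ N (f j), v.1 ⊗ₜ[k] (v.2 ⊗ₜ[k] g j))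
      = ∑ j ∈ S, f j ⊗ₜ[k] Coalgebra.comul (R := k) (g j) := by
    rw [← hA, ← hB, h0]
  have h2 := congrArg (LinearMap.lTensor H (LinearMap.lTensor H φ)) h1
  simp only [map_sum, LinearMap.lTensor_tmul] at h2
  exact h2

lemma innerP_eq {σ : Type} (S : Finset σ) (f g : σ → H) (y : H)
    (hy : Coalgebra.comul (R := k) y = ∑ j ∈ S, f j ⊗ₜ[k] g j) :
    ∑ j ∈ S, ∑ r ∈ N (f j), ∑ m ∈ N (g j), r.1 ⊗ₜ[k] (r.2 ⊗ₜ[k] (m.1 ⊗ₜ[k] m.2))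
      = ∑ j ∈ S, f j ⊗ₜ[k]
          (LinearMap.lTensor H (Coalgebra.comul (R := k)) (Coalgebra.comul (R := k) (g j))) := by
  calc ∑ j ∈ S, ∑ r ∈ N (f j), ∑ m ∈ N (g j), r.1 ⊗ₜ[k] (r.2 ⊗ₜ[k] (m.1 ⊗ₜ[k] m.2))
      = ∑ j ∈ S, ∑ r ∈ N (f j), r.1 ⊗ₜ[k] (r.2 ⊗ₜ[k]
          (Coalgebra.comul (R := k) : H →ₗ[k] H ⊗[k] H) (g j)) := by
        refine Finset.sum_congr rfl fun j _ => Finset.sum_congr rfl fun r _ => ?_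
        rw [hN (g j), TensorProduct.tmul_sum, TensorProduct.tmul_sum]
    _ = _ := crm N hN (Coalgebra.comul (R := k)) S f g y hy

lemma innerQ_eq {σ : Type} (S : Finset σ) (f g : σ → H) (y : H)
    (hy : Coalgebra.comul (R := k) y = ∑ j ∈ S, f j ⊗ₜ[k] g j) :
    ∑ j ∈ S, ∑ r ∈ N (f j), ∑ n ∈ N r.2, r.1 ⊗ₜ[k] (n.1 ⊗ₜ[k] (n.2 ⊗ₜ[k] g j))
      = ∑ j ∈ S, f j ⊗ₜ[k]
          (LinearMap.lTensor H (Coalgebra.comul (R := k)) (Coalgebra.comul (R := k) (g j))) := by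
  have h1 := crm N hN (LinearMap.id (R := k) (M := H)) S f g y hy
  simp only [LinearMap.lTensor_id, LinearMap.id_coe, id_eq] at h1
  have h2 := congrArg (LinearMap.lTensor H (s21 (k := k) (H := H))) h1
  simp only [map_sum, LinearMap.lTensor_tmul] at h2
  calc ∑ j ∈ S, ∑ r ∈ N (f j), ∑ n ∈ N r.2, r.1 ⊗ₜ[k] (n.1 ⊗ₜ[k] (n.2 ⊗ₜ[k] g j))
      = ∑ j ∈ S, ∑ r ∈ N (f j), r.1 ⊗ₜ[k] s21 (k := k) (r.2 ⊗ₜ[k] g j) := by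
        refine Finset.sum_congr rfl fun j _ => Finset.sum_congr rfl fun r _ => ?_
        rw [s21, LinearMap.comp_apply, LinearEquiv.coe_coe, LinearMap.rTensor_tmul,
          hN r.2, TensorProduct.sum_tmul, map_sum, TensorProduct.tmul_sum]
        exact Finset.sum_congr rfl fun n _ => by rw [TensorProduct.assoc_tmul]
    _ = ∑ j ∈ S, f j ⊗ₜ[k] s21 (k := k) (Coalgebra.comul (R := k) (g j)) := h2
    _ = _ := by
        refine Finset.sum_congr rfl fun j _ => ?_
        rw [s21_comul]

end Co

end PCP

end Aux

set_option maxHeartbeats 3200000 in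
/-- Lemma 2.5 (ii):
`(a # h)(b # l) = Σ a(h₁·b)ω(h₂,l₁) # h₃l₂`. -/
theorem sharp_mul_sharp
    {k H A : Type} [CommRing k] [Ring H] [HopfAlgebra k H]
    [Ring A] [Algebra k A] (P : TwistedPartialAction k H A)
    (μ : A ⊗[k] H →ₗ[k] A ⊗[k] H →ₗ[k] A ⊗[k] H)
    (hμ : IsCrossedMul P.act P.cocycle μ) :
    ∀ (a b : A) (h l : H) (ι ι' κ : Type) (s : Finset ι) (s' : ι → Finset ι')
      (t : Finset κ) (h1 h2 : ι → H) (h21 h22 : ι → ι' → H) (l1 l2 : κ → H),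
      Coalgebra.comul (R := k) h = ∑ i ∈ s, h1 i ⊗ₜ[k] h2 i →
      (∀ i ∈ s, Coalgebra.comul (R := k) (h2 i) =
        ∑ j ∈ s' i, h21 i j ⊗ₜ[k] h22 i j) →
      Coalgebra.comul (R := k) l = ∑ p ∈ t, l1 p ⊗ₜ[k] l2 p →
      μ (sharp P.act a h) (sharp P.act b l) =
        ∑ i ∈ s, ∑ j ∈ s' i, ∑ p ∈ t,
          sharp P.act (a * P.act (h1 i) b * P.cocycle (h21 i j) (l1 p))
            (h22 i j * l2 p) := by
  intro a b h l ι ι' κ s s' t h1 h2 h21 h22 l1 l2 hh hh2 hl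
  classical
  obtain ⟨N, hN⟩ : ∃ N : H → Finset (H × H),
      ∀ z : H, Coalgebra.comul (R := k) z = ∑ p ∈ N z, p.1 ⊗ₜ[k] p.2 :=
    ⟨fun z => (TensorProduct.exists_finset (Coalgebra.comul (R := k) z)).choose,
     fun z => (TensorProduct.exists_finset (Coalgebra.comul (R := k) z)).choose_spec⟩
  have hsharp : ∀ (c : A) (g : H) (σ : Type) (S : Finset σ) (f1 f2 : σ → H),
      Coalgebra.comul (R := k) g = ∑ x ∈ S, f1 x ⊗ₜ[k] f2 x →
      sharp P.act c g = ∑ x ∈ S, (c * P.act (f1 x) 1) ⊗ₜ[k] f2 x := by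
    intro c g σ S f1 f2 hg
    rw [sharp, hg, map_sum]
    refine Finset.sum_congr rfl fun x _ => ?_
    simp
  -- swapping the representation of the l-side three-fold comultiplication
  have hREPL : ∑ x ∈ t.sigma (fun p => N (l2 p)), l1 x.1 ⊗ₜ[k] (x.2.1 ⊗ₜ[k] x.2.2)
      = ∑ x ∈ t.sigma (fun p => N (l1 p)), x.2.1 ⊗ₜ[k] (x.2.2 ⊗ₜ[k] l2 x.1) := by
    rw [Finset.sum_sigma, Finset.sum_sigma]
    have hc := PCP.crm N hN (LinearMap.id (R := k) (M := H)) t l1 l2 l hl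
    simp only [LinearMap.lTensor_id, LinearMap.id_coe, id_eq] at hc
    rw [hc]
    refine Finset.sum_congr rfl fun p _ => ?_
    rw [hN (l2 p), TensorProduct.tmul_sum]
  -- the h-side five-fold representations
  have hPQ : ∑ i ∈ s, ∑ j ∈ s' i, ∑ r ∈ N (h21 i j), ∑ m ∈ N (h22 i j),
        h1 i ⊗ₜ[k] (r.1 ⊗ₜ[k] (r.2 ⊗ₜ[k] (m.1 ⊗ₜ[k] m.2)))
      = ∑ i ∈ s, ∑ j ∈ s' i, ∑ r ∈ N (h21 i j), ∑ n ∈ N r.2,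
        h1 i ⊗ₜ[k] (r.1 ⊗ₜ[k] (n.1 ⊗ₜ[k] (n.2 ⊗ₜ[k] h22 i j))) := by
    refine Finset.sum_congr rfl fun i hi => ?_
    have e1 := PCP.innerP_eq N hN (s' i) (h21 i) (h22 i) (h2 i) (hh2 i hi)
    have e2 := PCP.innerQ_eq N hN (s' i) (h21 i) (h22 i) (h2 i) (hh2 i hi)
    have e3 := congrArg (fun z => (TensorProduct.mk k H _ (h1 i)) z) (e1.trans e2.symm)
    simp only [map_sum, TensorProduct.mk_apply] at e3
    exact e3
  have hQR : ∑ i ∈ s, ∑ j ∈ s' i, ∑ r ∈ N (h21 i j), ∑ n ∈ N r.2,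
        h1 i ⊗ₜ[k] (r.1 ⊗ₜ[k] (n.1 ⊗ₜ[k] (n.2 ⊗ₜ[k] h22 i j)))
      = ∑ i ∈ s, ∑ v ∈ N (h1 i), ∑ j ∈ s' i, ∑ m ∈ N (h22 i j),
        v.1 ⊗ₜ[k] (v.2 ⊗ₜ[k] (h21 i j ⊗ₜ[k] (m.1 ⊗ₜ[k] m.2))) := by
    have hφ := PCP.crm N hN
      (LinearMap.lTensor H (Coalgebra.comul (R := k)) ∘ₗ (Coalgebra.comul (R := k) : H →ₗ[k] H ⊗[k] H))
      s h1 h2 h hh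
    calc ∑ i ∈ s, ∑ j ∈ s' i, ∑ r ∈ N (h21 i j), ∑ n ∈ N r.2,
          h1 i ⊗ₜ[k] (r.1 ⊗ₜ[k] (n.1 ⊗ₜ[k] (n.2 ⊗ₜ[k] h22 i j)))
        = ∑ i ∈ s, h1 i ⊗ₜ[k] (∑ j ∈ s' i, h21 i j ⊗ₜ[k]
            (LinearMap.lTensor H (Coalgebra.comul (R := k)) (Coalgebra.comul (R := k) (h22 i j)))) := by
          refine Finset.sum_congr rfl fun i hi => ?_
          have e2 := PCP.innerQ_eq N hN (s' i) (h21 i) (h22 i) (h2 i) (hh2 i hi)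
          have e3 := congrArg (fun z => (TensorProduct.mk k H _ (h1 i)) z) e2
          simp only [map_sum, TensorProduct.mk_apply] at e3
          rw [TensorProduct.tmul_sum]
          exact e3
      _ = ∑ i ∈ s, h1 i ⊗ₜ[k]
            (LinearMap.lTensor H (LinearMap.lTensor H (Coalgebra.comul (R := k)) ∘ₗ
              (Coalgebra.comul (R := k) : H →ₗ[k] H ⊗[k] H)) (Coalgebra.comul (R := k) (h2 i))) := by
          refine Finset.sum_congr rfl fun i hi => ?_
          refine congrArg (fun z => h1 i ⊗ₜ[k] z) ?_
          rw [hh2 i hi, map_sum]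
          exact Finset.sum_congr rfl fun j _ => by rw [LinearMap.lTensor_tmul]; rfl
      _ = ∑ i ∈ s, ∑ v ∈ N (h1 i), v.1 ⊗ₜ[k] (v.2 ⊗ₜ[k]
            ((LinearMap.lTensor H (Coalgebra.comul (R := k)) ∘ₗ
              (Coalgebra.comul (R := k) : H →ₗ[k] H ⊗[k] H)) (h2 i))) := hφ.symm
      _ = ∑ i ∈ s, ∑ v ∈ N (h1 i), ∑ j ∈ s' i, ∑ m ∈ N (h22 i j),
            v.1 ⊗ₜ[k] (v.2 ⊗ₜ[k] (h21 i j ⊗ₜ[k] (m.1 ⊗ₜ[k] m.2))) := by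
          refine Finset.sum_congr rfl fun i hi => Finset.sum_congr rfl fun v _ => ?_
          rw [LinearMap.comp_apply, hh2 i hi, map_sum]
          rw [show (∑ j ∈ s' i, LinearMap.lTensor H (Coalgebra.comul (R := k)) (h21 i j ⊗ₜ[k] h22 i j))
              = ∑ j ∈ s' i, ∑ m ∈ N (h22 i j), h21 i j ⊗ₜ[k] (m.1 ⊗ₜ[k] m.2) from
            Finset.sum_congr rfl fun j _ => by
              rw [LinearMap.lTensor_tmul, hN (h22 i j), TensorProduct.tmul_sum]]
          rw [TensorProduct.tmul_sum, TensorProduct.tmul_sum]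
          refine Finset.sum_congr rfl fun j _ => ?_
          rw [TensorProduct.tmul_sum, TensorProduct.tmul_sum]
  have hPQσ : ∑ x ∈ ((s.sigma s').sigma fun Q => N (h21 Q.1 Q.2)).sigma (fun Q => N (h22 Q.1.1 Q.1.2)),
        h1 x.1.1.1 ⊗ₜ[k] (x.1.2.1 ⊗ₜ[k] (x.1.2.2 ⊗ₜ[k] (x.2.1 ⊗ₜ[k] x.2.2)))
      = ∑ x ∈ ((s.sigma s').sigma fun Q => N (h21 Q.1 Q.2)).sigma (fun Q => N Q.2.2),
        h1 x.1.1.1 ⊗ₜ[k] (x.1.2.1 ⊗ₜ[k] (x.2.1 ⊗ₜ[k] (x.2.2 ⊗ₜ[k] h22 x.1.1.1 x.1.1.2))) := by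
    simp only [Finset.sum_sigma]
    exact hPQ
  have hQRσ : ∑ x ∈ ((s.sigma s').sigma fun Q => N (h21 Q.1 Q.2)).sigma (fun Q => N Q.2.2),
        h1 x.1.1.1 ⊗ₜ[k] (x.1.2.1 ⊗ₜ[k] (x.2.1 ⊗ₜ[k] (x.2.2 ⊗ₜ[k] h22 x.1.1.1 x.1.1.2)))
      = ∑ x ∈ ((s.sigma fun i => N (h1 i)).sigma fun Q => s' Q.1).sigma (fun Q => N (h22 Q.1.1 Q.2)),
        x.1.1.2.1 ⊗ₜ[k] (x.1.1.2.2 ⊗ₜ[k] (h21 x.1.1.1 x.1.2 ⊗ₜ[k] (x.2.1 ⊗ₜ[k] x.2.2))) := by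
    simp only [Finset.sum_sigma]
    exact hQR
  have hRHS : (∑ i ∈ s, ∑ j ∈ s' i, ∑ p ∈ t,
        sharp P.act (a * P.act (h1 i) b * P.cocycle (h21 i j) (l1 p)) (h22 i j * l2 p))
      = ∑ i ∈ s, ∑ j ∈ s' i, ∑ p ∈ t, ∑ m ∈ N (h22 i j), ∑ q ∈ N (l2 p),
          ((a * P.act (h1 i) b * P.cocycle (h21 i j) (l1 p)) * P.act (m.1 * q.1) 1)
            ⊗ₜ[k] (m.2 * q.2) := by
    refine Finset.sum_congr rfl fun i _ => Finset.sum_congr rfl fun j _ =>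
      Finset.sum_congr rfl fun p _ => ?_
    have hcm : Coalgebra.comul (R := k) (h22 i j * l2 p)
        = ∑ x ∈ (N (h22 i j)) ×ˢ (N (l2 p)), (x.1.1 * x.2.1) ⊗ₜ[k] (x.1.2 * x.2.2) := by
      rw [Bialgebra.comul_mul, hN (h22 i j), hN (l2 p), Finset.sum_mul_sum, Finset.sum_product]
      exact Finset.sum_congr rfl fun m _ => Finset.sum_congr rfl fun q _ =>
        (Algebra.TensorProduct.tmul_mul_tmul _ _ _ _)
    rw [hsharp _ _ _ _ _ _ hcm, Finset.sum_product]
  calc μ (sharp P.act a h) (sharp P.act b l)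
      = ∑ i ∈ s, ∑ p ∈ t, μ ((a * P.act (h1 i) 1) ⊗ₜ[k] h2 i) ((b * P.act (l1 p) 1) ⊗ₜ[k] l2 p) := by
        rw [hsharp a h ι s h1 h2 hh, hsharp b l κ t l1 l2 hl]
        simp only [map_sum, LinearMap.sum_apply]
        exact Finset.sum_comm
    _ = ∑ i ∈ s, ∑ p ∈ t, ∑ j ∈ s' i, ∑ m ∈ N (h22 i j), ∑ q ∈ N (l2 p),
          ((a * P.act (h1 i) 1) * P.act (h21 i j) (b * P.act (l1 p) 1) * P.cocycle m.1 q.1)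
            ⊗ₜ[k] (m.2 * q.2) := by
        refine Finset.sum_congr rfl fun i hi => Finset.sum_congr rfl fun p _ => ?_
        exact hμ (a * P.act (h1 i) 1) (b * P.act (l1 p) 1) (h2 i) (l2 p) ι' (H × H) (H × H)
          (s' i) (fun j => N (h22 i j)) (N (l2 p)) (h21 i) (h22 i)
          (fun _ q => q.1) (fun _ q => q.2) Prod.fst Prod.snd
          (hh2 i hi) (fun j _ => hN (h22 i j)) (hN (l2 p))
    _ = ∑ i ∈ s, ∑ j ∈ s' i, ∑ m ∈ N (h22 i j), ∑ p ∈ t, ∑ q ∈ N (l2 p),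
          ((a * P.act (h1 i) 1) * P.act (h21 i j) (b * P.act (l1 p) 1) * P.cocycle m.1 q.1)
            ⊗ₜ[k] (m.2 * q.2) := by
        refine Finset.sum_congr rfl fun i _ => ?_
        rw [Finset.sum_comm]
        exact Finset.sum_congr rfl fun j _ => Finset.sum_comm
    _ = ∑ i ∈ s, ∑ j ∈ s' i, ∑ m ∈ N (h22 i j), ∑ x ∈ t.sigma (fun p => N (l1 p)),
          ((a * P.act (h1 i) 1) * P.act (h21 i j) (b * P.act x.2.1 1) * P.cocycle m.1 x.2.2)
            ⊗ₜ[k] (m.2 * l2 x.1) := by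
        refine Finset.sum_congr rfl fun i _ => Finset.sum_congr rfl fun j _ =>
          Finset.sum_congr rfl fun m _ => ?_
        rw [Finset.sum_sigma' t (fun p => N (l2 p))]
        refine PCP.rep_congr3 hREPL
          (fun z1 z2 z3 => ((a * P.act (h1 i) 1) * P.act (h21 i j) (b * P.act z1 1)
            * P.cocycle m.1 z2) ⊗ₜ[k] (m.2 * z3)) ?_ ?_ ?_ ?_ ?_ ?_
        all_goals intros; simp [map_add, map_smul, LinearMap.add_apply, LinearMap.smul_apply, mul_add, add_mul, smul_mul_assoc, mul_smul_comm, TensorProduct.add_tmul, TensorProduct.tmul_add, TensorProduct.smul_tmul', TensorProduct.tmul_smul]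
    _ = ∑ y ∈ (s.sigma s').sigma (fun Q => N (h22 Q.1 Q.2)), ∑ x ∈ t.sigma (fun p => N (l1 p)),
          ((a * P.act (h1 y.1.1) 1) * P.act (h21 y.1.1 y.1.2) (b * P.act x.2.1 1)
            * P.cocycle y.2.1 x.2.2) ⊗ₜ[k] (y.2.2 * l2 x.1) := by
        simp only [Finset.sum_sigma]
    _ = ∑ x ∈ t.sigma (fun p => N (l1 p)), ∑ y ∈ (s.sigma s').sigma (fun Q => N (h22 Q.1 Q.2)),
          ((a * P.act (h1 y.1.1) 1) * P.act (h21 y.1.1 y.1.2) (b * P.act x.2.1 1)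
            * P.cocycle y.2.1 x.2.2) ⊗ₜ[k] (y.2.2 * l2 x.1) := Finset.sum_comm
    _ = ∑ x ∈ t.sigma (fun p => N (l1 p)), ∑ i ∈ s, ∑ j ∈ s' i, ∑ m ∈ N (h22 i j),
          ((a * P.act (h1 i) 1) * P.act (h21 i j) (b * P.act x.2.1 1)
            * P.cocycle m.1 x.2.2) ⊗ₜ[k] (m.2 * l2 x.1) := by
        simp only [Finset.sum_sigma]
    _ = ∑ x ∈ t.sigma (fun p => N (l1 p)), ∑ i ∈ s, ∑ j ∈ s' i, ∑ m ∈ N (h22 i j), ∑ r ∈ N (h21 i j),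
          ((a * P.act (h1 i) 1) * (P.act r.1 b * P.act r.2 (P.act x.2.1 1))
            * P.cocycle m.1 x.2.2) ⊗ₜ[k] (m.2 * l2 x.1) := by
        refine Finset.sum_congr rfl fun x _ => Finset.sum_congr rfl fun i _ =>
          Finset.sum_congr rfl fun j _ => Finset.sum_congr rfl fun m _ => ?_
        rw [P.act_mul (h21 i j) b (P.act x.2.1 1) (H × H) (N (h21 i j)) Prod.fst Prod.snd
          (hN (h21 i j))]
        simp only [Finset.mul_sum, Finset.sum_mul, TensorProduct.sum_tmul]
    _ = ∑ x ∈ t.sigma (fun p => N (l1 p)), ∑ i ∈ s, ∑ j ∈ s' i, ∑ r ∈ N (h21 i j), ∑ m ∈ N (h22 i j),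
          ((a * P.act (h1 i) 1) * (P.act r.1 b * P.act r.2 (P.act x.2.1 1))
            * P.cocycle m.1 x.2.2) ⊗ₜ[k] (m.2 * l2 x.1) := by
        refine Finset.sum_congr rfl fun x _ => Finset.sum_congr rfl fun i _ =>
          Finset.sum_congr rfl fun j _ => ?_
        exact Finset.sum_comm
    _ = ∑ x ∈ t.sigma (fun p => N (l1 p)),
          ∑ y ∈ ((s.sigma s').sigma fun Q => N (h21 Q.1 Q.2)).sigma (fun Q => N (h22 Q.1.1 Q.1.2)),
          ((a * P.act (h1 y.1.1.1) 1) * (P.act y.1.2.1 b * P.act y.1.2.2 (P.act x.2.1 1))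
            * P.cocycle y.2.1 x.2.2) ⊗ₜ[k] (y.2.2 * l2 x.1) := by
        simp only [Finset.sum_sigma]
    _ = ∑ x ∈ t.sigma (fun p => N (l1 p)),
          ∑ y ∈ ((s.sigma s').sigma fun Q => N (h21 Q.1 Q.2)).sigma (fun Q => N Q.2.2),
          ((a * P.act (h1 y.1.1.1) 1) * (P.act y.1.2.1 b * P.act y.2.1 (P.act x.2.1 1))
            * P.cocycle y.2.2 x.2.2) ⊗ₜ[k] (h22 y.1.1.1 y.1.1.2 * l2 x.1) := by
        refine Finset.sum_congr rfl fun x _ => ?_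
        refine PCP.rep_congr5 hPQσ
          (fun z1 z2 z3 z4 z5 => ((a * P.act z1 1) * (P.act z2 b * P.act z3 (P.act x.2.1 1))
            * P.cocycle z4 x.2.2) ⊗ₜ[k] (z5 * l2 x.1)) ?_ ?_ ?_ ?_ ?_ ?_ ?_ ?_ ?_ ?_
        all_goals intros; simp [map_add, map_smul, LinearMap.add_apply, LinearMap.smul_apply, mul_add, add_mul, smul_mul_assoc, mul_smul_comm, TensorProduct.add_tmul, TensorProduct.tmul_add, TensorProduct.smul_tmul', TensorProduct.tmul_smul]
    _ = ∑ p ∈ t, ∑ u ∈ N (l1 p), ∑ y ∈ (s.sigma s').sigma (fun Q => N (h21 Q.1 Q.2)), ∑ n ∈ N y.2.2,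
          ((a * P.act (h1 y.1.1) 1) * (P.act y.2.1 b * P.act n.1 (P.act u.1 1))
            * P.cocycle n.2 u.2) ⊗ₜ[k] (h22 y.1.1 y.1.2 * l2 p) := by
        simp only [Finset.sum_sigma]
    _ = ∑ p ∈ t, ∑ y ∈ (s.sigma s').sigma (fun Q => N (h21 Q.1 Q.2)), ∑ u ∈ N (l1 p), ∑ n ∈ N y.2.2,
          ((a * P.act (h1 y.1.1) 1) * (P.act y.2.1 b * P.act n.1 (P.act u.1 1))
            * P.cocycle n.2 u.2) ⊗ₜ[k] (h22 y.1.1 y.1.2 * l2 p) := by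
        refine Finset.sum_congr rfl fun p _ => ?_
        exact Finset.sum_comm
    _ = ∑ p ∈ t, ∑ y ∈ (s.sigma s').sigma (fun Q => N (h21 Q.1 Q.2)), ∑ n ∈ N y.2.2, ∑ u ∈ N (l1 p),
          ((a * P.act (h1 y.1.1) 1) * (P.act y.2.1 b * P.act n.1 (P.act u.1 1))
            * P.cocycle n.2 u.2) ⊗ₜ[k] (h22 y.1.1 y.1.2 * l2 p) := by
        refine Finset.sum_congr rfl fun p _ => Finset.sum_congr rfl fun y _ => ?_
        exact Finset.sum_comm
    _ = ∑ p ∈ t, ∑ y ∈ (s.sigma s').sigma (fun Q => N (h21 Q.1 Q.2)), ∑ n ∈ N y.2.2, ∑ u ∈ N (l1 p),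
          ((a * P.act (h1 y.1.1) 1) * P.act y.2.1 b
            * (P.cocycle n.1 u.1 * P.act (n.2 * u.2) 1)) ⊗ₜ[k] (h22 y.1.1 y.1.2 * l2 p) := by
        refine Finset.sum_congr rfl fun p _ => Finset.sum_congr rfl fun y _ => ?_
        have key := P.twisted y.2.2 (l1 p) 1 (H × H) (H × H) (N y.2.2) (N (l1 p))
          Prod.fst Prod.snd Prod.fst Prod.snd (hN y.2.2) (hN (l1 p))
        calc ∑ n ∈ N y.2.2, ∑ u ∈ N (l1 p),
              ((a * P.act (h1 y.1.1) 1) * (P.act y.2.1 b * P.act n.1 (P.act u.1 1))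
                * P.cocycle n.2 u.2) ⊗ₜ[k] (h22 y.1.1 y.1.2 * l2 p)
            = ((a * P.act (h1 y.1.1) 1) * P.act y.2.1 b *
                (∑ n ∈ N y.2.2, ∑ u ∈ N (l1 p), P.act n.1 (P.act u.1 1) * P.cocycle n.2 u.2))
                ⊗ₜ[k] (h22 y.1.1 y.1.2 * l2 p) := by
              simp only [Finset.mul_sum, TensorProduct.sum_tmul]
              refine Finset.sum_congr rfl fun n _ => Finset.sum_congr rfl fun u _ => ?_
              simp only [mul_assoc]
          _ = ((a * P.act (h1 y.1.1) 1) * P.act y.2.1 b *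
                (∑ n ∈ N y.2.2, ∑ u ∈ N (l1 p), P.cocycle n.1 u.1 * P.act (n.2 * u.2) 1))
                ⊗ₜ[k] (h22 y.1.1 y.1.2 * l2 p) := by rw [key]
          _ = ∑ n ∈ N y.2.2, ∑ u ∈ N (l1 p),
                ((a * P.act (h1 y.1.1) 1) * P.act y.2.1 b
                  * (P.cocycle n.1 u.1 * P.act (n.2 * u.2) 1)) ⊗ₜ[k] (h22 y.1.1 y.1.2 * l2 p) := by
              simp only [Finset.mul_sum, TensorProduct.sum_tmul]
    _ = ∑ p ∈ t, ∑ y ∈ (s.sigma s').sigma (fun Q => N (h21 Q.1 Q.2)), ∑ u ∈ N (l1 p), ∑ n ∈ N y.2.2,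
          ((a * P.act (h1 y.1.1) 1) * P.act y.2.1 b
            * (P.cocycle n.1 u.1 * P.act (n.2 * u.2) 1)) ⊗ₜ[k] (h22 y.1.1 y.1.2 * l2 p) := by
        refine Finset.sum_congr rfl fun p _ => Finset.sum_congr rfl fun y _ => ?_
        exact Finset.sum_comm
    _ = ∑ p ∈ t, ∑ u ∈ N (l1 p), ∑ y ∈ (s.sigma s').sigma (fun Q => N (h21 Q.1 Q.2)), ∑ n ∈ N y.2.2,
          ((a * P.act (h1 y.1.1) 1) * P.act y.2.1 b
            * (P.cocycle n.1 u.1 * P.act (n.2 * u.2) 1)) ⊗ₜ[k] (h22 y.1.1 y.1.2 * l2 p) := by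
        refine Finset.sum_congr rfl fun p _ => ?_
        exact Finset.sum_comm
    _ = ∑ x ∈ t.sigma (fun p => N (l1 p)),
          ∑ y ∈ ((s.sigma s').sigma fun Q => N (h21 Q.1 Q.2)).sigma (fun Q => N Q.2.2),
          ((a * P.act (h1 y.1.1.1) 1) * P.act y.1.2.1 b
            * (P.cocycle y.2.1 x.2.1 * P.act (y.2.2 * x.2.2) 1))
            ⊗ₜ[k] (h22 y.1.1.1 y.1.1.2 * l2 x.1) := by
        simp only [Finset.sum_sigma]
    _ = ∑ x ∈ t.sigma (fun p => N (l1 p)),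
          ∑ y ∈ ((s.sigma fun i => N (h1 i)).sigma fun Q => s' Q.1).sigma (fun Q => N (h22 Q.1.1 Q.2)),
          ((a * P.act y.1.1.2.1 1) * P.act y.1.1.2.2 b
            * (P.cocycle (h21 y.1.1.1 y.1.2) x.2.1 * P.act (y.2.1 * x.2.2) 1))
            ⊗ₜ[k] (y.2.2 * l2 x.1) := by
        refine Finset.sum_congr rfl fun x _ => ?_
        refine PCP.rep_congr5 hQRσ
          (fun z1 z2 z3 z4 z5 => ((a * P.act z1 1) * P.act z2 b
            * (P.cocycle z3 x.2.1 * P.act (z4 * x.2.2) 1)) ⊗ₜ[k] (z5 * l2 x.1))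
          ?_ ?_ ?_ ?_ ?_ ?_ ?_ ?_ ?_ ?_
        all_goals intros; simp [map_add, map_smul, LinearMap.add_apply, LinearMap.smul_apply, mul_add, add_mul, smul_mul_assoc, mul_smul_comm, TensorProduct.add_tmul, TensorProduct.tmul_add, TensorProduct.smul_tmul', TensorProduct.tmul_smul]
    _ = ∑ p ∈ t, ∑ u ∈ N (l1 p), ∑ i ∈ s, ∑ v ∈ N (h1 i), ∑ j ∈ s' i, ∑ m ∈ N (h22 i j),
          ((a * P.act v.1 1) * P.act v.2 b
            * (P.cocycle (h21 i j) u.1 * P.act (m.1 * u.2) 1)) ⊗ₜ[k] (m.2 * l2 p) := by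
        simp only [Finset.sum_sigma]
    _ = ∑ p ∈ t, ∑ u ∈ N (l1 p), ∑ i ∈ s, ∑ j ∈ s' i, ∑ v ∈ N (h1 i), ∑ m ∈ N (h22 i j),
          ((a * P.act v.1 1) * P.act v.2 b
            * (P.cocycle (h21 i j) u.1 * P.act (m.1 * u.2) 1)) ⊗ₜ[k] (m.2 * l2 p) := by
        refine Finset.sum_congr rfl fun p _ => Finset.sum_congr rfl fun u _ =>
          Finset.sum_congr rfl fun i _ => ?_
        exact Finset.sum_comm
    _ = ∑ p ∈ t, ∑ u ∈ N (l1 p), ∑ i ∈ s, ∑ j ∈ s' i, ∑ m ∈ N (h22 i j), ∑ v ∈ N (h1 i),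
          ((a * P.act v.1 1) * P.act v.2 b
            * (P.cocycle (h21 i j) u.1 * P.act (m.1 * u.2) 1)) ⊗ₜ[k] (m.2 * l2 p) := by
        refine Finset.sum_congr rfl fun p _ => Finset.sum_congr rfl fun u _ =>
          Finset.sum_congr rfl fun i _ => Finset.sum_congr rfl fun j _ => ?_
        exact Finset.sum_comm
    _ = ∑ p ∈ t, ∑ u ∈ N (l1 p), ∑ i ∈ s, ∑ j ∈ s' i, ∑ m ∈ N (h22 i j),
          (a * (P.act (h1 i) b * (P.cocycle (h21 i j) u.1 * P.act (m.1 * u.2) 1)))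
            ⊗ₜ[k] (m.2 * l2 p) := by
        refine Finset.sum_congr rfl fun p _ => Finset.sum_congr rfl fun u _ =>
          Finset.sum_congr rfl fun i _ => Finset.sum_congr rfl fun j _ =>
          Finset.sum_congr rfl fun m _ => ?_
        have hact : P.act (h1 i) b = ∑ v ∈ N (h1 i), P.act v.1 1 * P.act v.2 b := by
          have h' := P.act_mul (h1 i) 1 b (H × H) (N (h1 i)) Prod.fst Prod.snd (hN (h1 i))
          rwa [one_mul] at h'
        calc ∑ v ∈ N (h1 i),
              ((a * P.act v.1 1) * P.act v.2 b
                * (P.cocycle (h21 i j) u.1 * P.act (m.1 * u.2) 1)) ⊗ₜ[k] (m.2 * l2 p)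
            = (a * ((∑ v ∈ N (h1 i), P.act v.1 1 * P.act v.2 b) *
                (P.cocycle (h21 i j) u.1 * P.act (m.1 * u.2) 1))) ⊗ₜ[k] (m.2 * l2 p) := by
              simp only [Finset.mul_sum, Finset.sum_mul, TensorProduct.sum_tmul]
              refine Finset.sum_congr rfl fun v _ => ?_
              simp only [mul_assoc]
          _ = (a * (P.act (h1 i) b * (P.cocycle (h21 i j) u.1 * P.act (m.1 * u.2) 1)))
                ⊗ₜ[k] (m.2 * l2 p) := by rw [← hact]
    _ = ∑ x ∈ t.sigma (fun p => N (l1 p)), ∑ y ∈ (s.sigma s').sigma (fun Q => N (h22 Q.1 Q.2)),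
          (a * (P.act (h1 y.1.1) b * (P.cocycle (h21 y.1.1 y.1.2) x.2.1 * P.act (y.2.1 * x.2.2) 1)))
            ⊗ₜ[k] (y.2.2 * l2 x.1) := by
        simp only [Finset.sum_sigma]
    _ = ∑ y ∈ (s.sigma s').sigma (fun Q => N (h22 Q.1 Q.2)), ∑ x ∈ t.sigma (fun p => N (l1 p)),
          (a * (P.act (h1 y.1.1) b * (P.cocycle (h21 y.1.1 y.1.2) x.2.1 * P.act (y.2.1 * x.2.2) 1)))
            ⊗ₜ[k] (y.2.2 * l2 x.1) := Finset.sum_comm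
    _ = ∑ y ∈ (s.sigma s').sigma (fun Q => N (h22 Q.1 Q.2)), ∑ x ∈ t.sigma (fun p => N (l2 p)),
          (a * (P.act (h1 y.1.1) b * (P.cocycle (h21 y.1.1 y.1.2) (l1 x.1) * P.act (y.2.1 * x.2.1) 1)))
            ⊗ₜ[k] (y.2.2 * x.2.2) := by
        refine Finset.sum_congr rfl fun y _ => ?_
        refine PCP.rep_congr3 hREPL.symm
          (fun z1 z2 z3 => (a * (P.act (h1 y.1.1) b
            * (P.cocycle (h21 y.1.1 y.1.2) z1 * P.act (y.2.1 * z2) 1))) ⊗ₜ[k] (y.2.2 * z3))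
          ?_ ?_ ?_ ?_ ?_ ?_
        all_goals intros; simp [map_add, map_smul, LinearMap.add_apply, LinearMap.smul_apply, mul_add, add_mul, smul_mul_assoc, mul_smul_comm, TensorProduct.add_tmul, TensorProduct.tmul_add, TensorProduct.smul_tmul', TensorProduct.tmul_smul]
    _ = ∑ i ∈ s, ∑ j ∈ s' i, ∑ m ∈ N (h22 i j), ∑ p ∈ t, ∑ q ∈ N (l2 p),
          (a * (P.act (h1 i) b * (P.cocycle (h21 i j) (l1 p) * P.act (m.1 * q.1) 1)))
            ⊗ₜ[k] (m.2 * q.2) := by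
        simp only [Finset.sum_sigma]
    _ = ∑ i ∈ s, ∑ j ∈ s' i, ∑ p ∈ t, ∑ m ∈ N (h22 i j), ∑ q ∈ N (l2 p),
          (a * (P.act (h1 i) b * (P.cocycle (h21 i j) (l1 p) * P.act (m.1 * q.1) 1)))
            ⊗ₜ[k] (m.2 * q.2) := by
        refine Finset.sum_congr rfl fun i _ => Finset.sum_congr rfl fun j _ => ?_
        exact Finset.sum_comm
    _ = ∑ i ∈ s, ∑ j ∈ s' i, ∑ p ∈ t, ∑ m ∈ N (h22 i j), ∑ q ∈ N (l2 p),
          ((a * P.act (h1 i) b * P.cocycle (h21 i j) (l1 p)) * P.act (m.1 * q.1) 1)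
            ⊗ₜ[k] (m.2 * q.2) := by
        refine Finset.sum_congr rfl fun i _ => Finset.sum_congr rfl fun j _ =>
          Finset.sum_congr rfl fun p _ => Finset.sum_congr rfl fun m _ =>
          Finset.sum_congr rfl fun q _ => ?_
        simp only [mul_assoc]
    _ = ∑ i ∈ s, ∑ j ∈ s' i, ∑ p ∈ t,
          sharp P.act (a * P.act (h1 i) b * P.cocycle (h21 i j) (l1 p)) (h22 i j * l2 p) :=
        hRHS.symm
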